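/- For any lists A, B over Σ and index pairs: if C₁ is a common sublist of (take i A) and (take j B), C₂ is a common sublist of (drop i' A) and (drop j' B) with i ≤ i' and j ≤ j', and M is a common sublist of the middle segments (drop i (take i' A)) and (drop j (take j' B)), then C₁ ++ M ++ C₂ is a common sublist of A and B. -/

import Mathlib

/-- Maximum length of a common sublist (LCS length) of `X` and `Y`. -/
def LLCS {σ : Type} [DecidableEq σ] (X Y : List σ) : ℕ :=
  ((X.sublists.filter (fun C => decide (C.Sublist Y))).map List.length).foldr max 0

/-- `I` is an appearance (embedding witness) of `P` in `A`: a strictly increasing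
list of (0-based) indices realizing `P` as a sublist of `A`. -/
def IsApp {σ : Type} (A P : List σ) (I : List ℕ) : Prop :=
  I.Chain' (· < ·) ∧ I.length = P.length ∧ ∀ t, t < I.length → A[I.getD t 0]? = P[t]?

/-- A greedy (compact) appearance: each next index is the least possible one. -/
def IsGreedy {σ : Type} (A P : List σ) (I : List ℕ) : Prop :=
  IsApp A P I ∧ ∀ t, t + 1 < I.length → ∀ k, I.getD t 0 < k → A[k]? = P[t+1]? →
    I.getD (t+1) 0 ≤ k

lemma aux5 {σ : Type} (A C₁ C₂ M : List σ) (i i' : ℕ) (hii : i ≤ i')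
    (h1 : C₁.Sublist (A.take i)) (h2 : C₂.Sublist (A.drop i'))
    (hM : M.Sublist ((A.take i').drop i)) : (C₁ ++ M ++ C₂).Sublist A := by
  have hA : A = (A.take i ++ (A.take i').drop i) ++ A.drop i' := by
    have : List.take i A = List.take i (List.take i' A) := by
      rw [List.take_take, min_eq_left hii]
    rw [this, List.take_append_drop, List.take_append_drop]
  calc (C₁ ++ M ++ C₂).Sublist ((A.take i ++ (A.take i').drop i) ++ A.drop i') :=
        ((h1.append hM).append h2)
    _ = A := hA.symm

theorem stmt5 {σ : Type} (A B C₁ C₂ M : List σ) (i i' j j' : ℕ)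
    (hii : i ≤ i') (hjj : j ≤ j')
    (h1A : C₁.Sublist (A.take i)) (h1B : C₁.Sublist (B.take j))
    (h2A : C₂.Sublist (A.drop i')) (h2B : C₂.Sublist (B.drop j'))
    (hMA : M.Sublist ((A.take i').drop i)) (hMB : M.Sublist ((B.take j').drop j)) :
    (C₁ ++ M ++ C₂).Sublist A ∧ (C₁ ++ M ++ C₂).Sublist B :=
  ⟨aux5 A C₁ C₂ M i i' hii h1A h2A hMA, aux5 B C₁ C₂ M j j' hjj h1B h2B hMB⟩
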